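/- Fix $e\ge2$ and a characteristic parameter $p\in\{0\}\cup\{\text{primes}\}$. For two-column partitions, define $\operatorname{ch}_q\mathcal T=\sum_{\mathtt t\in\mathcal T}q^{\deg_e(\mathtt t)}\cdot\mathbf i^{\mathtt t}$ in the free $\mathbb Z[q,q^{-1}]$-module on $({\mathbb Z}/e)^n$, for any finite set $\mathcal T$ of standard tableaux of size $n$. Let $\operatorname{DStd}_{e,p}(\lambda)$ be the set of standard $\lambda$-tableaux fixed by $\operatorname{reg}_{ep^z}$ for all $z\ge0$ (just by $\operatorname{reg}_e$ when $p=0$). Then for any two-column partition $\lambda$ of $n$, the bar involution (sending $q\mapsto q^{-1}$) fixes $\operatorname{ch}_q\operatorname{DStd}_{e,p}(\lambda)$. Concretely: there is an involution $\iota$ of $\operatorname{DStd}_{e,p}(\lambda)$, obtained by reflecting every arc of the associated path in the wall where it begins and ends, satisfying $\mathbf i^{\iota(\mathtt t)}=\mathbf i^{\mathtt t}$ and $\deg_e(\iota(\mathtt t))=-\deg_e(\mathtt t)$. -/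

import Mathlib

open scoped Classical
noncomputable section

def isWall (e x : ℤ) : Prop := 0 < x + 1 ∧ (x + 1) % e = 0

def degStep (e u v : ℤ) : ℤ :=
  if isWall e u ∧ v < u then 1
  else if isWall e v ∧ v < u then -1
  else 0

def pathDeg (e : ℤ) (π : ℕ → ℤ) (r s : ℕ) : ℤ :=
  ∑ a ∈ Finset.Ico r s, degStep e (π a) (π (a + 1))

/-- A nonnegative `±1`-path on the interval `[u,v]`. -/
def IsPathOn (π : ℕ → ℤ) (u v : ℕ) : Prop :=
  (∀ a, u ≤ a → a ≤ v → 0 ≤ π a) ∧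
  (∀ a, u ≤ a → a < v → π (a + 1) = π a + 1 ∨ π (a + 1) = π a - 1)

/-- `π[r,s]` is a positive arc (within `[u,v]`). -/
def IsPosArc (e : ℤ) (π : ℕ → ℤ) (u v r s : ℕ) : Prop :=
  u ≤ r ∧ r < s ∧ s ≤ v ∧ isWall e (π r) ∧ π s = π r ∧
    ∀ c, r < c → c < s → π r < π c ∧ π c < π r + e

/-- `π[r,s]` is a negative arc (within `[u,v]`). -/
def IsNegArc (e : ℤ) (π : ℕ → ℤ) (u v r s : ℕ) : Prop :=
  u ≤ r ∧ r < s ∧ s ≤ v ∧ isWall e (π r) ∧ π s = π r ∧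
    ∀ c, r < c → c < s → π r - e < π c ∧ π c < π r

def posArcs (e : ℤ) (π : ℕ → ℤ) (u v : ℕ) : Set (ℕ × ℕ) :=
  {p | IsPosArc e π u v p.1 p.2}

def negArcs (e : ℤ) (π : ℕ → ℤ) (u v : ℕ) : Set (ℕ × ℕ) :=
  {p | IsNegArc e π u v p.1 p.2}


def wallTimes (f : ℤ) (n : ℕ) (π : ℕ → ℤ) : Finset ℕ :=
  (Finset.range (n + 1)).filter fun a => isWall f (π a)

/-- The regularisation map on paths: reflect the tail after the last wall
visit upward in the wall, if the endpoint lies strictly below that wall. -/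
def regPath (f : ℤ) (n : ℕ) (π : ℕ → ℤ) : ℕ → ℤ :=
  if h : (wallTimes f n π).Nonempty then
    let a := (wallTimes f n π).max' h
    if π n < π a then (fun b => if b ≤ a then π b else 2 * π a - π b) else π
  else π

/-- A standard tableau of size `n` (0-based nodes): injective, image is a
Young diagram (downward closed), entries increase along rows and columns. -/
def IsStdTab (n : ℕ) (t : Fin n → ℕ × ℕ) : Prop :=
  Function.Injective t ∧
  (∀ r : Fin n, ∀ a b : ℕ, a ≤ (t r).1 → b ≤ (t r).2 → ∃ r' : Fin n, t r' = (a, b)) ∧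
  (∀ r s : Fin n, (t r).1 ≤ (t s).1 → (t r).2 ≤ (t s).2 → r ≤ s)

/-- Number of entries among the first `a` entries lying in column `j`. -/
def cntCol (n : ℕ) (t : Fin n → ℕ × ℕ) (a j : ℕ) : ℕ :=
  (Finset.univ.filter fun r : Fin n => (r : ℕ) < a ∧ (t r).2 = j).card

/-- The type-`A₁` path attached to a two-column tableau. -/
def pth (n : ℕ) (t : Fin n → ℕ × ℕ) (a : ℕ) : ℤ :=
  (cntCol n t a 0 : ℤ) - (cntCol n t a 1 : ℤ)

/-- Membership in the Young diagram of `(2^x, 1^y)` (0-based). -/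
def memShape2 (x y : ℕ) (v : ℕ × ℕ) : Prop :=
  (v.1 < x ∧ v.2 < 2) ∨ (x ≤ v.1 ∧ v.1 < x + y ∧ v.2 = 0)

/-- The residue of a node (0-based): column minus row, mod `e`. -/
def resNode (e : ℕ) (v : ℕ × ℕ) : ZMod e := (v.2 : ZMod e) - (v.1 : ZMod e)

/-- Membership in `DStd_{e,p}(λ)` for `λ = (2^x, 1^y)`: a standard tableau of
shape `λ` whose path is fixed by `reg_{e p^z}` for all `z ≥ 0` (when `p = 0`,
only `z = 0` gives a nontrivial condition, i.e. `reg_e`-fixedness). -/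
def InDStd (e p n x y : ℕ) (t : Fin n → ℕ × ℕ) : Prop :=
  IsStdTab n t ∧ (∀ i, memShape2 x y (t i)) ∧
  ∀ z : ℕ, regPath ((e : ℤ) * (p : ℤ) ^ z) n (pth n t) = pth n t


/-! ### Auxiliary machinery -/

section Aux

variable {e : ℤ} {n : ℕ} {π : ℕ → ℤ}

lemma isWall_dvd {x : ℤ} (h : isWall e x) : e ∣ x + 1 :=
  Int.dvd_of_emod_eq_zero h.2

lemma isWall_of_dvd {x : ℤ} (h1 : 0 < x + 1) (h2 : e ∣ x + 1) : isWall e x :=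
  ⟨h1, Int.emod_eq_zero_of_dvd h2⟩

lemma wall_ge (he : 2 ≤ e) {x : ℤ} (h : isWall e x) : e - 1 ≤ x := by
  have := Int.le_of_dvd h.1 (isWall_dvd h); omega

lemma wall_spacing (he : 2 ≤ e) {x y : ℤ} (hx : isWall e x) (hy : isWall e y)
    (hxy : x < y) : x + e ≤ y := by
  have hd : e ∣ (y + 1) - (x + 1) := dvd_sub (isWall_dvd hy) (isWall_dvd hx)
  have := Int.le_of_dvd (by omega) hd
  omega

lemma not_wall_between (he : 2 ≤ e) {w x : ℤ} (hw : isWall e w)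
    (h1 : w - e < x) (h2 : x < w + e) (h3 : x ≠ w) : ¬ isWall e x := by
  intro hx
  rcases lt_or_gt_of_ne h3 with h | h
  · have := wall_spacing he hx hw h; omega
  · have := wall_spacing he hw hx h; omega

lemma isWall_add (he : 2 ≤ e) (hw : isWall e w) : isWall e (w + e) := by
  refine isWall_of_dvd (by have := hw.1; omega) ?_
  have := isWall_dvd hw
  have : e ∣ (w + 1) + e := Dvd.dvd.add this dvd_rfl
  convert this using 1; ring

lemma isWall_sub (he : 2 ≤ e) (hw : isWall e w) : w + 1 = e ∨ isWall e (w - e) := by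
  have hd := isWall_dvd hw
  rcases eq_or_lt_of_le (Int.le_of_dvd hw.1 hd) with h | h
  · left; omega
  · right
    refine isWall_of_dvd (by omega) ?_
    have : e ∣ (w + 1) - e := dvd_sub hd dvd_rfl
    convert this using 1; ring

/-- Hypotheses on the path of a regularisation-fixed tableau. -/
structure PathHyp (e : ℤ) (n : ℕ) (π : ℕ → ℤ) : Prop where
  step : ∀ a, a < n → π (a + 1) = π a + 1 ∨ π (a + 1) = π a - 1
  pos : ∀ a, a ≤ n → 0 ≤ π a
  zero : π 0 = 0
  tail : ∀ c, c ≤ n → isWall e (π c) →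
    (∀ c', c < c' → c' ≤ n → ¬ isWall e (π c')) → π c ≤ π n

lemma ivt_up (H : PathHyp e n π) :
    ∀ b, b ≤ n → ∀ a v, a ≤ b → π a ≤ v → v ≤ π b →
    ∃ c, a ≤ c ∧ c ≤ b ∧ π c = v := by
  intro b
  induction b with
  | zero =>
    intro _ a v ha h1 h2
    exact ⟨0, by omega, le_rfl, by interval_cases a; omega⟩
  | succ b ih =>
    intro hbn a v ha h1 h2
    rcases eq_or_lt_of_le h1 with h | h
    · exact ⟨a, le_rfl, ha, h⟩
    · have hab : a ≠ b + 1 := by rintro rfl; omega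
      have ha' : a ≤ b := by omega
      have hst := H.step b (by omega)
      by_cases hv : v ≤ π b
      · obtain ⟨c, hc1, hc2, hc3⟩ := ih (by omega) a v ha' h1 hv
        exact ⟨c, hc1, by omega, hc3⟩
      · push_neg at hv
        refine ⟨b + 1, by omega, le_rfl, ?_⟩
        omega

lemma ivt_dn (H : PathHyp e n π) :
    ∀ b, b ≤ n → ∀ a v, a ≤ b → v ≤ π a → π b ≤ v →
    ∃ c, a ≤ c ∧ c ≤ b ∧ π c = v := by
  intro b
  induction b with
  | zero =>
    intro _ a v ha h1 h2
    exact ⟨0, by omega, le_rfl, by interval_cases a; omega⟩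
  | succ b ih =>
    intro hbn a v ha h1 h2
    rcases eq_or_lt_of_le h2 with h | h
    · exact ⟨b + 1, by omega, le_rfl, h⟩
    · have hab : a ≠ b + 1 := by rintro rfl; omega
      have ha' : a ≤ b := by omega
      have hst := H.step b (by omega)
      by_cases hv : π b ≤ v
      · obtain ⟨c, hc1, hc2, hc3⟩ := ih (by omega) a v ha' h1 hv
        exact ⟨c, hc1, by omega, hc3⟩
      · push_neg at hv
        refine ⟨b + 1, by omega, le_rfl, ?_⟩
        omega


/-- An arc (positive or negative). -/
def IsArc (e : ℤ) (π : ℕ → ℤ) (n r s : ℕ) : Prop :=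
  IsPosArc e π 0 n r s ∨ IsNegArc e π 0 n r s

lemma IsArc.lt {r s : ℕ} (h : IsArc e π n r s) : r < s := by
  rcases h with h | h <;> exact h.2.1

lemma IsArc.le_n {r s : ℕ} (h : IsArc e π n r s) : s ≤ n := by
  rcases h with h | h <;> exact h.2.2.1

lemma IsArc.wall {r s : ℕ} (h : IsArc e π n r s) : isWall e (π r) := by
  rcases h with h | h <;> exact h.2.2.2.1

lemma IsArc.ends {r s : ℕ} (h : IsArc e π n r s) : π s = π r := by
  rcases h with h | h <;> exact h.2.2.2.2.1

lemma IsArc.interior_not_wall (he : 2 ≤ e) {r s c : ℕ} (h : IsArc e π n r s)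
    (h1 : r < c) (h2 : c < s) : ¬ isWall e (π c) := by
  rcases h with h | h
  · obtain ⟨hlo, hhi⟩ := h.2.2.2.2.2 c h1 h2
    exact not_wall_between he h.2.2.2.1 (by omega) (by omega) (by omega)
  · obtain ⟨hlo, hhi⟩ := h.2.2.2.2.2 c h1 h2
    exact not_wall_between he h.2.2.2.1 (by omega) (by omega) (by omega)

lemma IsArc.two (H : PathHyp e n π) {r s : ℕ} (h : IsArc e π n r s) :
    r + 2 ≤ s := by
  have h1 := h.lt
  have h2 := h.le_n
  have h3 := h.ends
  rcases Nat.lt_or_ge (r + 1) s with h4 | h4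
  · omega
  · have : s = r + 1 := by omega
    subst this
    have := H.step r (by omega)
    omega

lemma arc_start_unique (he : 2 ≤ e) {r s r' s' b : ℕ} (h : IsArc e π n r s)
    (h' : IsArc e π n r' s') (h1 : r < b) (h2 : b < s) (h3 : r' < b) (h4 : b < s') :
    r = r' := by
  by_contra hne
  rcases Nat.lt_or_ge r r' with hlt | hge
  · exact h.interior_not_wall he hlt (by omega) h'.wall
  · exact h'.interior_not_wall he (by omega) (by omega) h.wall

lemma arc_end_unique (he : 2 ≤ e) {r s s' : ℕ} (h : IsArc e π n r s)
    (h' : IsArc e π n r s') : s = s' := by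
  by_contra hne
  rcases Nat.lt_or_ge s s' with hlt | hge
  · have := h'.interior_not_wall he h.lt hlt
    rw [h.ends] at this
    exact this h'.wall
  · have := h.interior_not_wall he h'.lt (by omega)
    rw [h'.ends] at this
    exact this h.wall

/-- `b` lies strictly inside some arc. -/
def strictIn (e : ℤ) (n : ℕ) (π : ℕ → ℤ) (b : ℕ) : Prop :=
  ∃ r s, IsArc e π n r s ∧ r < b ∧ b < s

/-- Latest wall-visit time `≤ b`. -/
def lastWallVisit (e : ℤ) (π : ℕ → ℤ) (b : ℕ) : ℕ :=
  (((Finset.range (b + 1)).filter fun c => isWall e (π c)).sup id)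

/-- Reflection of every arc in its wall. -/
def rfV (e : ℤ) (n : ℕ) (π : ℕ → ℤ) (b : ℕ) : ℤ :=
  if strictIn e n π b then 2 * π (lastWallVisit e π b) - π b else π b

lemma lastWallVisit_eq (he : 2 ≤ e) {r s b : ℕ} (h : IsArc e π n r s)
    (h1 : r < b) (h2 : b < s) : lastWallVisit e π b = r := by
  apply le_antisymm
  · apply Finset.sup_le
    intro c hc
    simp only [Finset.mem_filter, Finset.mem_range] at hc
    simp only [id_eq]
    by_contra hcr
    exact h.interior_not_wall he (by omega) (by omega) hc.2
  · apply Finset.le_sup (f := id)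
    simp only [Finset.mem_filter, Finset.mem_range]
    exact ⟨by omega, h.wall⟩

lemma rfV_of_not_strictIn {b : ℕ} (h : ¬ strictIn e n π b) : rfV e n π b = π b :=
  if_neg h

lemma rfV_of_wall (he : 2 ≤ e) {b : ℕ} (h : isWall e (π b)) : rfV e n π b = π b := by
  apply rfV_of_not_strictIn
  rintro ⟨r, s, ha, h1, h2⟩
  exact ha.interior_not_wall he h1 h2 h

lemma rfV_arc (he : 2 ≤ e) {r s b : ℕ} (h : IsArc e π n r s)
    (h1 : r ≤ b) (h2 : b ≤ s) : rfV e n π b = 2 * π r - π b := by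
  rcases eq_or_lt_of_le h1 with rfl | h1'
  · rw [rfV_of_wall he h.wall]; ring
  rcases eq_or_lt_of_le h2 with rfl | h2'
  · rw [rfV_of_wall he (h.ends ▸ h.wall), h.ends]; ring
  have hst : strictIn e n π b := ⟨r, s, h, h1', h2'⟩
  rw [rfV, if_pos hst]
  obtain ⟨r', s', h', h1'', h2''⟩ := hst
  rw [lastWallVisit_eq he h' h1'' h2'',
    arc_start_unique he h h' h1' h2' h1'' h2'']

lemma rfV_zero : rfV e n π 0 = π 0 := by
  apply rfV_of_not_strictIn
  rintro ⟨r, s, ha, h1, h2⟩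
  omega

lemma rfV_last : rfV e n π n = π n := by
  apply rfV_of_not_strictIn
  rintro ⟨r, s, ha, h1, h2⟩
  have := ha.le_n
  omega


lemma isWall_of_dvd_wall {f : ℤ} (hef : e ∣ f) {x : ℤ} (h : isWall f x) :
    isWall e x :=
  isWall_of_dvd h.1 (dvd_trans hef (isWall_dvd h))

lemma not_wall_zero (he : 2 ≤ e) (H : PathHyp e n π) : ¬ isWall e (π 0) := by
  rw [H.zero]
  intro h
  have := Int.le_of_dvd (by omega) (isWall_dvd h)
  omega

lemma rfV_bounds (he : 2 ≤ e) {b : ℕ} (hst : strictIn e n π b) :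
    ∃ w, isWall e w ∧ rfV e n π b = 2 * w - π b ∧
      ((w < π b ∧ π b < w + e) ∨ (w - e < π b ∧ π b < w)) := by
  obtain ⟨r, s, harc, h1, h2⟩ := hst
  refine ⟨π r, harc.wall, rfV_arc he harc (by omega) (by omega), ?_⟩
  rcases harc with h | h
  · exact Or.inl (h.2.2.2.2.2 b h1 h2)
  · exact Or.inr (h.2.2.2.2.2 b h1 h2)

lemma rfV_pos (he : 2 ≤ e) (H : PathHyp e n π) {b : ℕ} (hb : b ≤ n) :
    0 ≤ rfV e n π b := by
  by_cases hst : strictIn e n π b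
  · obtain ⟨w, hw, heq, hc⟩ := rfV_bounds he hst
    have := wall_ge he hw
    rcases hc with hc | hc <;> omega
  · rw [rfV_of_not_strictIn hst]; exact H.pos b hb

lemma rfV_step (he : 2 ≤ e) (H : PathHyp e n π) {a : ℕ} (ha : a < n) :
    rfV e n π (a + 1) = rfV e n π a + 1 ∨ rfV e n π (a + 1) = rfV e n π a - 1 := by
  have hs := H.step a ha
  by_cases h1 : strictIn e n π a
  · obtain ⟨r, s, harc, hr, hsb⟩ := h1
    rw [rfV_arc he harc (by omega) (by omega), rfV_arc he harc (by omega) (by omega)]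
    omega
  · by_cases h2 : strictIn e n π (a + 1)
    · obtain ⟨r, s, harc, hr, hsb⟩ := h2
      rw [rfV_arc he harc (by omega) (by omega), rfV_arc he harc (by omega) (by omega)]
      omega
    · rw [rfV_of_not_strictIn h1, rfV_of_not_strictIn h2]
      exact hs

lemma rfV_wall_iff (he : 2 ≤ e) {f : ℤ} (hef : e ∣ f) (b : ℕ) :
    isWall f (rfV e n π b) ↔ isWall f (π b) := by
  by_cases hst : strictIn e n π b
  · obtain ⟨r, s, harc, h1, h2⟩ := hst
    have hnw : ¬ isWall e (π b) := harc.interior_not_wall he h1 h2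
    have heq := rfV_arc he harc (le_of_lt h1) (le_of_lt h2)
    have hnw' : ¬ isWall e (rfV e n π b) := by
      rw [heq]
      have hw := harc.wall
      rcases harc with h | h
      · obtain ⟨hlo, hhi⟩ := h.2.2.2.2.2 b h1 h2
        exact not_wall_between he hw (by omega) (by omega) (by omega)
      · obtain ⟨hlo, hhi⟩ := h.2.2.2.2.2 b h1 h2
        exact not_wall_between he hw (by omega) (by omega) (by omega)
    constructor
    · intro h; exact absurd (isWall_of_dvd_wall hef h) hnw'
    · intro h; exact absurd (isWall_of_dvd_wall hef h) hnw
  · rw [rfV_of_not_strictIn hst]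

lemma rfV_pathHyp (he : 2 ≤ e) (H : PathHyp e n π) : PathHyp e n (rfV e n π) where
  step := fun a ha => rfV_step he H ha
  pos := fun a ha => rfV_pos he H ha
  zero := by rw [rfV_zero, H.zero]
  tail := by
    intro c hc hw hnw
    rw [rfV_last]
    have hw' : isWall e (π c) := (rfV_wall_iff he dvd_rfl c).mp hw
    rw [rfV_of_wall he hw']
    refine H.tail c hc hw' ?_
    intro c' h1 h2 hw''
    exact hnw c' h1 h2 ((rfV_wall_iff he dvd_rfl c').mpr hw'')

/-! ### degStep / pathDeg computation -/

lemma degStep_of_not_lt {u v : ℤ} (h : ¬ v < u) : degStep e u v = 0 := by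
  rw [degStep, if_neg (by tauto), if_neg (by tauto)]

lemma degStep_notwall {u v : ℤ} (h1 : ¬ isWall e u) (h2 : ¬ isWall e v) :
    degStep e u v = 0 := by
  rw [degStep, if_neg (by tauto), if_neg (by tauto)]

lemma degStep_from_wall {u v : ℤ} (h1 : isWall e u) (h2 : v < u) :
    degStep e u v = 1 := by
  rw [degStep, if_pos ⟨h1, h2⟩]

lemma degStep_onto_wall {u v : ℤ} (h0 : ¬ isWall e u) (h1 : isWall e v) (h2 : v < u) :
    degStep e u v = -1 := by
  rw [degStep, if_neg (by tauto), if_pos ⟨h1, h2⟩]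

lemma pathDeg_split {π : ℕ → ℤ} {a m b : ℕ} (h1 : a ≤ m) (h2 : m ≤ b) :
    pathDeg e π a b = pathDeg e π a m + pathDeg e π m b :=
  (Finset.sum_Ico_consecutive _ h1 h2).symm

lemma pathDeg_zero {π : ℕ → ℤ} {a b : ℕ}
    (h : ∀ c, a ≤ c → c < b → degStep e (π c) (π (c + 1)) = 0) :
    pathDeg e π a b = 0 := by
  apply Finset.sum_eq_zero
  intro c hc
  rw [Finset.mem_Ico] at hc
  exact h c hc.1 hc.2

lemma pathDeg_single {π : ℕ → ℤ} {a : ℕ} :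
    pathDeg e π a (a + 1) = degStep e (π a) (π (a + 1)) := by
  rw [pathDeg, Finset.sum_Ico_eq_sum_range]
  simp

lemma pathDeg_last {π : ℕ → ℤ} {a b : ℕ} (h : a < b) :
    pathDeg e π (b - 1) b = degStep e (π (b - 1)) (π b) := by
  obtain ⟨m, rfl⟩ : ∃ m, b = m + 1 := ⟨b - 1, by omega⟩
  rw [show m + 1 - 1 = m by omega, pathDeg_single]

lemma pathDeg_congr {π₁ π₂ : ℕ → ℤ} {a b : ℕ}
    (h : ∀ c, a ≤ c → c ≤ b → π₁ c = π₂ c) :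
    pathDeg e π₁ a b = pathDeg e π₂ a b := by
  apply Finset.sum_congr rfl
  intro c hc
  rw [Finset.mem_Ico] at hc
  rw [h c hc.1 (by omega), h (c + 1) (by omega) (by omega)]

/-! ### The segment lemma -/

lemma seg (he : 2 ≤ e) (H : PathHyp e n π) {a b : ℕ} (hab : a < b) (hbn : b ≤ n)
    (hwa : isWall e (π a)) (hwb : isWall e (π b))
    (hint : ∀ c, a < c → c < b → ¬ isWall e (π c)) :
    (π (a + 1) = π a + 1 ∧
      ((π b = π a ∧ IsPosArc e π 0 n a b ∧ pathDeg e π a b = -1) ∨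
       (π b = π a + e ∧ pathDeg e π a b = 0)))
    ∨ (π (a + 1) = π a - 1 ∧
      ((π b = π a ∧ IsNegArc e π 0 n a b ∧ pathDeg e π a b = 1) ∨
       (π b = π a - e ∧ pathDeg e π a b = 0))) := by
  have han : a < n := by omega
  rcases H.step a han with hup | hdn
  · -- up step
    left
    refine ⟨hup, ?_⟩
    have hbd : ∀ c, a < c → c < b → π a < π c ∧ π c < π a + e := by
      intro c hc1 hc2
      constructor
      · by_contra hle
        push_neg at hle
        obtain ⟨c', hc1', hc2', hc3'⟩ :=
          ivt_dn H c (by omega) (a + 1) (π a) (by omega) (by omega) hle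
        exact hint c' (by omega) (by omega) (hc3' ▸ hwa)
      · by_contra hge
        push_neg at hge
        obtain ⟨c', hc1', hc2', hc3'⟩ :=
          ivt_up H c (by omega) (a + 1) (π a + e) (by omega) (by omega) hge
        exact hint c' (by omega) (by omega) (hc3' ▸ isWall_add he hwa)
    have hb1a : a < b - 1 := by
      rcases Nat.lt_or_ge (a + 1) b with h | h
      · omega
      · exfalso
        have : b = a + 1 := by omega
        subst this
        exact not_wall_between he hwa (by omega) (by omega) (by omega) (hup ▸ hwb)
    have hbm1 := hbd (b - 1) hb1a (by omega)
    have hbstep := H.step (b - 1) (by omega)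
    rw [show b - 1 + 1 = b by omega] at hbstep
    have hπb : π b = π a ∨ π b = π a + e := by
      by_contra hc
      push_neg at hc
      exact not_wall_between he hwa (by omega) (by omega) hc.1 hwb
    rcases hπb with hπb | hπb
    · left
      have harc : IsPosArc e π 0 n a b := ⟨Nat.zero_le _, hab, hbn, hwa, hπb, hbd⟩
      refine ⟨hπb, harc, ?_⟩
      rw [pathDeg_split (e := e) (le_of_lt hb1a) (by omega : b - 1 ≤ b)]
      have h2 : pathDeg e π (b - 1) b = -1 := by
        rw [pathDeg_last hab]
        apply degStep_onto_wall
        · exact hint (b - 1) hb1a (by omega)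
        · exact hwb
        · omega
      have h1 : pathDeg e π a (b - 1) = 0 := by
        apply pathDeg_zero
        intro c hc1 hc2
        rcases eq_or_lt_of_le hc1 with rfl | hlt
        · exact degStep_of_not_lt (by omega)
        · apply degStep_notwall (hint c hlt (by omega))
          exact hint (c + 1) (by omega) (by omega)
      omega
    · right
      refine ⟨hπb, ?_⟩
      apply pathDeg_zero
      intro c hc1 hc2
      rcases eq_or_lt_of_le hc1 with rfl | hlt
      · exact degStep_of_not_lt (by omega)
      · rcases Nat.lt_or_ge (c + 1) b with h | h
        · exact degStep_notwall (hint c hlt (by omega)) (hint (c + 1) (by omega) h)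
        · have : c + 1 = b := by omega
          rw [this]
          have := hbd c hlt (by omega)
          exact degStep_of_not_lt (by omega)
  · -- down step
    right
    refine ⟨hdn, ?_⟩
    have hbd : ∀ c, a < c → c < b → π a - e < π c ∧ π c < π a := by
      intro c hc1 hc2
      constructor
      · by_contra hle
        push_neg at hle
        obtain ⟨c', hc1', hc2', hc3'⟩ :=
          ivt_dn H c (by omega) (a + 1) (π a - e) (by omega) (by omega) hle
        rcases isWall_sub he hwa with h | h
        · have := H.pos c' (by omega); omega
        · exact hint c' (by omega) (by omega) (hc3' ▸ h)
      · by_contra hge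
        push_neg at hge
        obtain ⟨c', hc1', hc2', hc3'⟩ :=
          ivt_up H c (by omega) (a + 1) (π a) (by omega) (by omega) hge
        exact hint c' (by omega) (by omega) (hc3' ▸ hwa)
    have hb1a : a < b - 1 := by
      rcases Nat.lt_or_ge (a + 1) b with h | h
      · omega
      · exfalso
        have : b = a + 1 := by omega
        subst this
        exact not_wall_between he hwa (by omega) (by omega) (by omega) (hdn ▸ hwb)
    have hbm1 := hbd (b - 1) hb1a (by omega)
    have hbstep := H.step (b - 1) (by omega)
    rw [show b - 1 + 1 = b by omega] at hbstep
    have hπb : π b = π a ∨ π b = π a - e := by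
      by_contra hc
      push_neg at hc
      exact not_wall_between he hwa (by omega) (by omega) hc.1 hwb
    rcases hπb with hπb | hπb
    · left
      have harc : IsNegArc e π 0 n a b := ⟨Nat.zero_le _, hab, hbn, hwa, hπb, hbd⟩
      refine ⟨hπb, harc, ?_⟩
      rw [pathDeg_split (e := e) (by omega : a ≤ a + 1) (by omega : a + 1 ≤ b)]
      have h1 : pathDeg e π a (a + 1) = 1 := by
        rw [pathDeg_single, hdn]
        exact degStep_from_wall hwa (by omega)
      have h2 : pathDeg e π (a + 1) b = 0 := by
        apply pathDeg_zero
        intro c hc1 hc2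
        have hu : ¬ isWall e (π c) := hint c (by omega) hc2
        rcases Nat.lt_or_ge (c + 1) b with h | h
        · exact degStep_notwall hu (hint (c + 1) (by omega) h)
        · have : c + 1 = b := by omega
          rw [this]
          have := hbd c (by omega) (by omega)
          exact degStep_of_not_lt (by omega)
      omega
    · right
      refine ⟨hπb, ?_⟩
      rw [pathDeg_split (e := e) (by omega : a ≤ a + 1) (by omega : a + 1 ≤ b),
        pathDeg_split (e := e) (by omega : a + 1 ≤ b - 1) (by omega : b - 1 ≤ b)]
      have h1 : pathDeg e π a (a + 1) = 1 := by
        rw [pathDeg_single, hdn]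
        exact degStep_from_wall hwa (by omega)
      have h3 : pathDeg e π (b - 1) b = -1 := by
        rw [pathDeg_last hab]
        apply degStep_onto_wall (hint (b - 1) hb1a (by omega)) hwb
        omega
      have h2 : pathDeg e π (a + 1) (b - 1) = 0 := by
        apply pathDeg_zero
        intro c hc1 hc2
        exact degStep_notwall (hint c (by omega) (by omega))
          (hint (c + 1) (by omega) (by omega))
      omega


lemma seg_no_strict (he : 2 ≤ e) (H : PathHyp e n π) {a b : ℕ} (hab : a < b)
    (hbn : b ≤ n) (hwa : isWall e (π a)) (hwb : isWall e (π b))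
    (hint : ∀ c, a < c → c < b → ¬ isWall e (π c)) (hne : π b ≠ π a) :
    ∀ c, a ≤ c → c ≤ b → ¬ strictIn e n π c := by
  rintro c hc1 hc2 ⟨r, s, harc, h1, h2⟩
  have hra : a ≤ r := by
    by_contra h
    push_neg at h
    exact harc.interior_not_wall he h (by omega) hwa
  have hreq : r = a := by
    rcases eq_or_lt_of_le hra with h | h
    · omega
    · exact absurd harc.wall (hint r h (by omega))
  subst hreq
  have hsw : isWall e (π s) := harc.ends ▸ harc.wall
  rcases Nat.lt_trichotomy s b with h | h | h
  · exact (hint s harc.lt h) hsw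
  · exact hne (h ▸ harc.ends)
  · exact harc.interior_not_wall he hab h hwb

lemma first_seg (he : 2 ≤ e) (H : PathHyp e n π) {b : ℕ} (hbn : b ≤ n)
    (hwb : isWall e (π b)) (hint : ∀ c, c < b → ¬ isWall e (π c)) :
    pathDeg e π 0 b = 0 ∧ ∀ c, c ≤ b → ¬ strictIn e n π c := by
  constructor
  · apply pathDeg_zero
    intro c hc1 hc2
    rcases Nat.lt_or_ge (c + 1) b with h | h
    · exact degStep_notwall (hint c hc2) (hint (c + 1) h)
    · have hcb : c + 1 = b := by omega
      apply degStep_of_not_lt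
      intro hlt
      rw [hcb] at hlt
      have hwge := wall_ge he hwb
      have h0 := H.zero
      obtain ⟨c', hc1', hc2', hc3'⟩ :=
        ivt_up H c (by omega) 0 (π b) (by omega) (by omega) (by omega)
      exact hint c' (by omega) (hc3' ▸ hwb)
  · rintro c hc ⟨r, s, harc, h1, h2⟩
    exact hint r (by omega) harc.wall

lemma last_seg (he : 2 ≤ e) (H : PathHyp e n π) {a : ℕ} (han : a ≤ n)
    (hwa : isWall e (π a)) (hint : ∀ c, a < c → c ≤ n → ¬ isWall e (π c)) :
    pathDeg e π a n = 0 ∧ ∀ c, a ≤ c → ¬ strictIn e n π c := by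
  have htl := H.tail a han hwa hint
  constructor
  · rcases eq_or_lt_of_le han with rfl | hlt
    · exact pathDeg_zero (fun c h1 h2 => by omega)
    · rcases H.step a hlt with hup | hdn
      · apply pathDeg_zero
        intro c hc1 hc2
        rcases eq_or_lt_of_le hc1 with rfl | h
        · rw [hup]; exact degStep_of_not_lt (by omega)
        · exact degStep_notwall (hint c h (by omega)) (hint (c + 1) (by omega) (by omega))
      · exfalso
        have hn : ∀ c, a < c → c ≤ n → π c < π a := by
          intro c h1 h2
          by_contra hge
          push_neg at hge
          obtain ⟨c', hc1', hc2', hc3'⟩ :=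
            ivt_up H c h2 (a + 1) (π a) (by omega) (by omega) hge
          exact hint c' (by omega) (by omega) (hc3' ▸ hwa)
        have := hn n hlt le_rfl
        omega
  · rintro c hc ⟨r, s, harc, h1, h2⟩
    have hra : a ≤ r := by
      by_contra h
      push_neg at h
      exact harc.interior_not_wall he h (by omega) hwa
    have hsn := harc.le_n
    rcases eq_or_lt_of_le hra with h | h
    · exact hint s (by omega) hsn (harc.ends ▸ harc.wall)
    · exact hint r h (by omega) harc.wall

lemma deg_refl_key (he : 2 ≤ e) (H : PathHyp e n π) :
    ∀ k a, n - a ≤ k → a ≤ n → (a = 0 ∨ isWall e (π a)) →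
    pathDeg e (rfV e n π) a n = - pathDeg e π a n := by
  have H' := rfV_pathHyp he H
  have hwiff : ∀ c, isWall e (rfV e n π c) ↔ isWall e (π c) :=
    fun c => rfV_wall_iff he dvd_rfl c
  intro k
  induction k with
  | zero =>
    intro a h1 h2 h3
    have : a = n := by omega
    subst this
    rw [pathDeg_zero (fun c hc1 hc2 => by omega),
      pathDeg_zero (fun c hc1 hc2 => by omega)]
    ring
  | succ k ih =>
    intro a h1 h2 h3
    by_cases hex : ∃ c, a < c ∧ c ≤ n ∧ isWall e (π c)
    · have hspec := Nat.find_spec hex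
      set b := Nat.find hex with hbdef
      obtain ⟨hb1, hb2, hb3⟩ := hspec
      have hint : ∀ c, a < c → c < b → ¬ isWall e (π c) := by
        intro c hc1 hc2 hw
        exact Nat.find_min hex hc2 ⟨hc1, by omega, hw⟩
      have IH := ih b (by omega) hb2 (Or.inr hb3)
      rw [pathDeg_split (e := e) (π := π) (le_of_lt hb1) hb2,
        pathDeg_split (e := e) (π := rfV e n π) (le_of_lt hb1) hb2, IH]
      suffices hseg : pathDeg e (rfV e n π) a b = - pathDeg e π a b by omega
      have hint' : ∀ c, a < c → c < b → ¬ isWall e (rfV e n π c) := by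
        intro c hc1 hc2
        rw [hwiff c]
        exact hint c hc1 hc2
      rcases h3 with rfl | hwa
      · -- first segment
        have hnw0 : ¬ isWall e (π 0) := not_wall_zero he H
        have hintf : ∀ c, c < b → ¬ isWall e (π c) := by
          intro c hc
          rcases Nat.eq_zero_or_pos c with rfl | h
          · exact hnw0
          · exact hint c h hc
        obtain ⟨hz, hns⟩ := first_seg he H hb2 hb3 hintf
        have hcongr : ∀ c, 0 ≤ c → c ≤ b → rfV e n π c = π c :=
          fun c _ hc => rfV_of_not_strictIn (hns c hc)
        rw [pathDeg_congr hcongr, hz]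
        ring
      · -- wall at a
        have hwa' : isWall e (rfV e n π a) := (hwiff a).mpr hwa
        have hwb' : isWall e (rfV e n π b) := (hwiff b).mpr hb3
        have hva : rfV e n π a = π a := rfV_of_wall he hwa
        have hvb : rfV e n π b = π b := rfV_of_wall he hb3
        rcases seg he H hb1 hb2 hwa hb3 hint with ⟨hd, hcase⟩ | ⟨hd, hcase⟩ <;>
          rcases hcase with ⟨hπb, harc, hdeg⟩ | ⟨hπb, hdeg⟩
        · -- pos arc
          have hva1 : rfV e n π (a + 1) = π a - 1 := by
            rw [rfV_arc he (Or.inl harc) (by omega) (by omega), hd]; ring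
          rcases seg he H' hb1 hb2 hwa' hwb' hint' with ⟨hd', hcase'⟩ | ⟨hd', hcase'⟩
          · exfalso; rw [hva1, hva] at hd'; omega
          · rcases hcase' with ⟨_, _, hdeg'⟩ | ⟨heqb, _⟩
            · omega
            · exfalso; rw [hva, hvb, hπb] at heqb; omega
        · -- up crossing
          have hnostrict := seg_no_strict he H hb1 hb2 hwa hb3 hint (by omega)
          have hcongr : ∀ c, a ≤ c → c ≤ b → rfV e n π c = π c :=
            fun c hc1 hc2 => rfV_of_not_strictIn (hnostrict c hc1 hc2)
          rw [pathDeg_congr hcongr, hdeg]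
          ring
        · -- neg arc
          have hva1 : rfV e n π (a + 1) = π a + 1 := by
            rw [rfV_arc he (Or.inr harc) (by omega) (by omega), hd]; ring
          rcases seg he H' hb1 hb2 hwa' hwb' hint' with ⟨hd', hcase'⟩ | ⟨hd', hcase'⟩
          · rcases hcase' with ⟨_, _, hdeg'⟩ | ⟨heqb, _⟩
            · omega
            · exfalso; rw [hva, hvb, hπb] at heqb; omega
          · exfalso; rw [hva1, hva] at hd'; omega
        · -- down crossing
          have hnostrict := seg_no_strict he H hb1 hb2 hwa hb3 hint (by omega)
          have hcongr : ∀ c, a ≤ c → c ≤ b → rfV e n π c = π c :=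
            fun c hc1 hc2 => rfV_of_not_strictIn (hnostrict c hc1 hc2)
          rw [pathDeg_congr hcongr, hdeg]
          ring
    · -- no wall after a
      push_neg at hex
      rcases h3 with rfl | hwa
      · have hnw : ∀ c, c ≤ n → ¬ isWall e (π c) := by
          intro c hc
          rcases Nat.eq_zero_or_pos c with rfl | h
          · exact not_wall_zero he H
          · exact hex c h hc
        rw [pathDeg_zero (fun c hc1 hc2 =>
            degStep_notwall (hnw c (by omega)) (hnw (c+1) (by omega))),
          pathDeg_zero (fun c hc1 hc2 => degStep_notwall
            ((fun h => (hnw c (by omega)) ((hwiff c).mp h)))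
            ((fun h => (hnw (c+1) (by omega)) ((hwiff (c+1)).mp h))))]
        ring
      · obtain ⟨hz, hns⟩ := last_seg he H h2 hwa hex
        have hcongr : ∀ c, a ≤ c → c ≤ n → rfV e n π c = π c :=
          fun c hc1 _ => rfV_of_not_strictIn (hns c hc1)
        rw [pathDeg_congr hcongr, hz]
        ring

lemma deg_refl (he : 2 ≤ e) (H : PathHyp e n π) :
    pathDeg e (rfV e n π) 0 n = - pathDeg e π 0 n :=
  deg_refl_key he H n 0 (by omega) (by omega) (Or.inl rfl)


lemma rfV_arc_fwd (he : 2 ≤ e) {r s : ℕ} (h : IsArc e π n r s) :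
    IsArc e (rfV e n π) n r s := by
  have hvr : rfV e n π r = π r := rfV_of_wall he h.wall
  have hvs : rfV e n π s = π s := rfV_of_wall he (h.ends ▸ h.wall)
  rcases h with hp | hp
  · refine Or.inr ⟨Nat.zero_le _, hp.2.1, hp.2.2.1, hvr ▸ hp.2.2.2.1, ?_, ?_⟩
    · rw [hvr, hvs, hp.2.2.2.2.1]
    · intro c h1 h2
      obtain ⟨hlo, hhi⟩ := hp.2.2.2.2.2 c h1 h2
      rw [hvr, rfV_arc he (Or.inl hp) (by omega) (by omega)]
      omega
  · refine Or.inl ⟨Nat.zero_le _, hp.2.1, hp.2.2.1, hvr ▸ hp.2.2.2.1, ?_, ?_⟩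
    · rw [hvr, hvs, hp.2.2.2.2.1]
    · intro c h1 h2
      obtain ⟨hlo, hhi⟩ := hp.2.2.2.2.2 c h1 h2
      rw [hvr, rfV_arc he (Or.inr hp) (by omega) (by omega)]
      omega

lemma arc_of_rfV_arc (he : 2 ≤ e) (H : PathHyp e n π) {r s : ℕ}
    (h : IsArc e (rfV e n π) n r s) : IsArc e π n r s := by
  have hwr : isWall e (π r) := (rfV_wall_iff he dvd_rfl r).mp h.wall
  have hvr : rfV e n π r = π r := rfV_of_wall he hwr
  have hws' : isWall e (rfV e n π s) := h.ends ▸ h.wall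
  have hws : isWall e (π s) := (rfV_wall_iff he dvd_rfl s).mp hws'
  have hvs : rfV e n π s = π s := rfV_of_wall he hws
  have hends : π s = π r := by rw [← hvr, ← hvs]; exact h.ends
  have hint : ∀ c, r < c → c < s → ¬ isWall e (π c) := by
    intro c h1 h2 hw
    exact h.interior_not_wall he h1 h2 ((rfV_wall_iff he dvd_rfl c).mpr hw)
  rcases seg he H h.lt h.le_n hwr hws hint with ⟨_, hcase⟩ | ⟨_, hcase⟩ <;>
    rcases hcase with ⟨_, harc, _⟩ | ⟨hπb, _⟩
  · exact Or.inl harc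
  · exfalso; omega
  · exact Or.inr harc
  · exfalso; omega

lemma rfV_invol (he : 2 ≤ e) (H : PathHyp e n π) {b : ℕ} (hb : b ≤ n) :
    rfV e n (rfV e n π) b = π b := by
  by_cases hst : strictIn e n (rfV e n π) b
  · obtain ⟨r, s, harc', h1, h2⟩ := hst
    have harc : IsArc e π n r s := arc_of_rfV_arc he H harc'
    rw [rfV_arc he harc' (by omega) (by omega),
      rfV_of_wall he harc.wall, rfV_arc he harc (by omega) (by omega)]
    ring
  · rw [rfV_of_not_strictIn hst]
    apply rfV_of_not_strictIn
    rintro ⟨r, s, harc, h1, h2⟩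
    exact hst ⟨r, s, rfV_arc_fwd he harc, h1, h2⟩

/-! ### Congruence lemmas -/

lemma isArc_congr {π₁ π₂ : ℕ → ℤ} (h : ∀ c, c ≤ n → π₁ c = π₂ c) {r s : ℕ}
    (ha : IsArc e π₁ n r s) : IsArc e π₂ n r s := by
  have hr : r ≤ n := by have := ha.lt; have := ha.le_n; omega
  have hs : s ≤ n := ha.le_n
  rcases ha with hp | hp
  · exact Or.inl ⟨hp.1, hp.2.1, hp.2.2.1, h r hr ▸ hp.2.2.2.1,
      by rw [← h r hr, ← h s hs]; exact hp.2.2.2.2.1,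
      fun c h1 h2 => by
        rw [← h r hr, ← h c (by omega)]; exact hp.2.2.2.2.2 c h1 h2⟩
  · exact Or.inr ⟨hp.1, hp.2.1, hp.2.2.1, h r hr ▸ hp.2.2.2.1,
      by rw [← h r hr, ← h s hs]; exact hp.2.2.2.2.1,
      fun c h1 h2 => by
        rw [← h r hr, ← h c (by omega)]; exact hp.2.2.2.2.2 c h1 h2⟩

lemma strictIn_congr {π₁ π₂ : ℕ → ℤ} (h : ∀ c, c ≤ n → π₁ c = π₂ c) {b : ℕ} :
    strictIn e n π₁ b → strictIn e n π₂ b := by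
  rintro ⟨r, s, ha, h1, h2⟩
  exact ⟨r, s, isArc_congr h ha, h1, h2⟩

lemma lastWallVisit_le {b : ℕ} : lastWallVisit e π b ≤ b := by
  apply Finset.sup_le
  intro c hc
  simp only [Finset.mem_filter, Finset.mem_range] at hc
  simp only [id_eq]
  omega

lemma rfV_congr {π₁ π₂ : ℕ → ℤ} (h : ∀ c, c ≤ n → π₁ c = π₂ c) {b : ℕ}
    (hb : b ≤ n) : rfV e n π₁ b = rfV e n π₂ b := by
  have hlwv : lastWallVisit e π₁ b = lastWallVisit e π₂ b := by
    unfold lastWallVisit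
    congr 1
    apply Finset.filter_congr
    intro c hc
    simp only [Finset.mem_range] at hc
    rw [h c (by omega)]
  by_cases hst : strictIn e n π₁ b
  · have hst2 : strictIn e n π₂ b := strictIn_congr h hst
    rw [rfV, rfV, if_pos hst, if_pos hst2, hlwv, h b hb,
      h (lastWallVisit e π₂ b) (le_trans (hlwv ▸ lastWallVisit_le) hb)]
  · have hst2 : ¬ strictIn e n π₂ b := by
      intro hc
      exact hst (strictIn_congr (fun c hc' => (h c hc').symm) hc)
    rw [rfV, rfV, if_neg hst, if_neg hst2, h b hb]


/-! ### Tableau reconstruction from paths -/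

/-- Number of up-steps before time `b`. -/
def upCnt (π : ℕ → ℤ) (b : ℕ) : ℕ :=
  ((Finset.range b).filter fun c => π (c + 1) = π c + 1).card

/-- Number of down-steps before time `b`. -/
def dnCnt (π : ℕ → ℤ) (b : ℕ) : ℕ :=
  ((Finset.range b).filter fun c => ¬ (π (c + 1) = π c + 1)).card

lemma upCnt_add_dnCnt (π : ℕ → ℤ) (b : ℕ) : upCnt π b + dnCnt π b = b := by
  rw [upCnt, dnCnt, Finset.card_filter_add_card_filter_not]
  exact Finset.card_range b

lemma upCnt_succ (π : ℕ → ℤ) (b : ℕ) :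
    upCnt π (b + 1) = upCnt π b + (if π (b + 1) = π b + 1 then 1 else 0) := by
  rw [upCnt, upCnt, Finset.range_add_one, Finset.filter_insert]
  split
  · rw [Finset.card_insert_of_notMem (by simp)]
  · rw [Nat.add_zero]

lemma dnCnt_succ (π : ℕ → ℤ) (b : ℕ) :
    dnCnt π (b + 1) = dnCnt π b + (if π (b + 1) = π b + 1 then 0 else 1) := by
  rw [dnCnt, dnCnt, Finset.range_add_one, Finset.filter_insert]
  by_cases h : π (b + 1) = π b + 1
  · rw [if_neg (not_not_intro h), if_pos h, Nat.add_zero]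
  · rw [if_pos h, if_neg h, Finset.card_insert_of_notMem (by simp)]

lemma upCnt_mono (π : ℕ → ℤ) {a b : ℕ} (h : a ≤ b) : upCnt π a ≤ upCnt π b :=
  Finset.card_le_card (Finset.filter_subset_filter _
    (Finset.range_subset_range.mpr h))

lemma dnCnt_mono (π : ℕ → ℤ) {a b : ℕ} (h : a ≤ b) : dnCnt π a ≤ dnCnt π b :=
  Finset.card_le_card (Finset.filter_subset_filter _
    (Finset.range_subset_range.mpr h))

lemma cnt_val {π : ℕ → ℤ} (hz : π 0 = 0)
    (hstep : ∀ a, a < n → π (a + 1) = π a + 1 ∨ π (a + 1) = π a - 1) :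
    ∀ b, b ≤ n → (upCnt π b : ℤ) - (dnCnt π b : ℤ) = π b := by
  intro b
  induction b with
  | zero => intro _; simp [upCnt, dnCnt, hz]
  | succ b ih =>
    intro hb
    have IH := ih (by omega)
    rcases hstep b (by omega) with h | h
    · rw [upCnt_succ, dnCnt_succ, if_pos h, if_pos h, h]
      push_cast
      omega
    · have h' : ¬ (π (b + 1) = π b + 1) := by omega
      rw [upCnt_succ, dnCnt_succ, if_neg h', if_neg h', h]
      push_cast
      omega

lemma find_cnt (q : ℕ → Prop) [DecidablePred q] :
    ∀ m a, a < ((Finset.range m).filter fun c => q c).card →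
    ∃ c, c < m ∧ q c ∧ ((Finset.range c).filter fun c => q c).card = a := by
  intro m
  induction m with
  | zero => simp
  | succ m ih =>
    intro a ha
    by_cases h : a < ((Finset.range m).filter fun c => q c).card
    · obtain ⟨c, h1, h2, h3⟩ := ih a h
      exact ⟨c, by omega, h2, h3⟩
    · push_neg at h
      have hsucc : ((Finset.range (m + 1)).filter fun c => q c).card =
          ((Finset.range m).filter fun c => q c).card + (if q m then 1 else 0) := by
        rw [Finset.range_add_one, Finset.filter_insert]
        split
        · rw [Finset.card_insert_of_notMem (by simp)]
        · rw [Nat.add_zero]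
      rw [hsucc] at ha
      split_ifs at ha with hq
      · exact ⟨m, by omega, hq, by omega⟩
      · omega

/-- Rebuild a two-column tableau from a path. -/
def rebuild (n : ℕ) (π : ℕ → ℤ) (r : Fin n) : ℕ × ℕ :=
  if π ((r : ℕ) + 1) = π (r : ℕ) + 1 then (upCnt π (r : ℕ), 0) else (dnCnt π (r : ℕ), 1)

lemma upCnt_congr {π₁ π₂ : ℕ → ℤ} (h : ∀ c, c ≤ n → π₁ c = π₂ c) {b : ℕ}
    (hb : b ≤ n) : upCnt π₁ b = upCnt π₂ b := by
  unfold upCnt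
  congr 1
  apply Finset.filter_congr
  intro c hc
  rw [Finset.mem_range] at hc
  rw [h c (by omega), h (c + 1) (by omega)]

lemma dnCnt_congr {π₁ π₂ : ℕ → ℤ} (h : ∀ c, c ≤ n → π₁ c = π₂ c) {b : ℕ}
    (hb : b ≤ n) : dnCnt π₁ b = dnCnt π₂ b := by
  unfold dnCnt
  congr 1
  apply Finset.filter_congr
  intro c hc
  rw [Finset.mem_range] at hc
  rw [h c (by omega), h (c + 1) (by omega)]

lemma rebuild_congr {π₁ π₂ : ℕ → ℤ} (h : ∀ c, c ≤ n → π₁ c = π₂ c) :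
    rebuild n π₁ = rebuild n π₂ := by
  funext r
  have hr := r.isLt
  unfold rebuild
  rw [h ((r : ℕ) + 1) (by omega), h (r : ℕ) (by omega),
    upCnt_congr h (by omega), dnCnt_congr h (by omega)]

/-! ### cntCol basics -/

lemma cntCol_zero (t : Fin n → ℕ × ℕ) (j : ℕ) : cntCol n t 0 j = 0 := by
  simp [cntCol]

lemma cntCol_succ (t : Fin n → ℕ × ℕ) {a : ℕ} (ha : a < n) (j : ℕ) :
    cntCol n t (a + 1) j = cntCol n t a j + (if (t ⟨a, ha⟩).2 = j then 1 else 0) := by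
  rw [cntCol, cntCol]
  have hsplit : (Finset.univ.filter fun r : Fin n => (r : ℕ) < a + 1 ∧ (t r).2 = j) =
      (Finset.univ.filter fun r : Fin n => (r : ℕ) < a ∧ (t r).2 = j) ∪
      (Finset.univ.filter fun r : Fin n => (r : ℕ) = a ∧ (t r).2 = j) := by
    ext r
    simp only [Finset.mem_filter, Finset.mem_union, Finset.mem_univ, true_and]
    constructor
    · rintro ⟨h1, h2⟩
      rcases Nat.lt_succ_iff_lt_or_eq.mp h1 with h | h
      · exact Or.inl ⟨h, h2⟩
      · exact Or.inr ⟨h, h2⟩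
    · rintro (⟨h1, h2⟩ | ⟨h1, h2⟩)
      · exact ⟨by omega, h2⟩
      · exact ⟨by omega, h2⟩
  rw [hsplit, Finset.card_union_of_disjoint (by
    rw [Finset.disjoint_left]
    intro r h1 h2
    simp only [Finset.mem_filter, Finset.mem_univ, true_and] at h1 h2
    omega)]
  congr 1
  by_cases hj : (t ⟨a, ha⟩).2 = j
  · rw [if_pos hj]
    have : (Finset.univ.filter fun r : Fin n => (r : ℕ) = a ∧ (t r).2 = j) =
        {⟨a, ha⟩} := by
      ext r
      simp only [Finset.mem_filter, Finset.mem_univ, true_and, Finset.mem_singleton]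
      constructor
      · rintro ⟨h1, _⟩
        exact Fin.ext h1
      · rintro rfl
        exact ⟨rfl, hj⟩
    rw [this, Finset.card_singleton]
  · rw [if_neg hj]
    have : (Finset.univ.filter fun r : Fin n => (r : ℕ) = a ∧ (t r).2 = j) = ∅ := by
      ext r
      simp only [Finset.mem_filter, Finset.mem_univ, true_and,
        Finset.notMem_empty, iff_false]
      rintro ⟨h1, h2⟩
      exact hj ((Fin.ext h1 : r = ⟨a, ha⟩) ▸ h2)
    rw [this, Finset.card_empty]

lemma pth_zero (t : Fin n → ℕ × ℕ) : pth n t 0 = 0 := by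
  simp [pth, cntCol_zero]


section Std

variable {x y : ℕ} {t : Fin n → ℕ × ℕ}

lemma col01 (hsh : ∀ i, memShape2 x y (t i)) (r : Fin n) :
    (t r).2 = 0 ∨ (t r).2 = 1 := by
  rcases hsh r with ⟨_, h⟩ | ⟨_, _, h⟩
  · omega
  · exact Or.inl h

lemma pth_succ (hsh : ∀ i, memShape2 x y (t i)) {a : ℕ} (ha : a < n) :
    (pth n t (a + 1) = pth n t a + 1 ∧ (t ⟨a, ha⟩).2 = 0) ∨
    (pth n t (a + 1) = pth n t a - 1 ∧ (t ⟨a, ha⟩).2 = 1) := by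
  rcases col01 hsh ⟨a, ha⟩ with h | h
  · left
    refine ⟨?_, h⟩
    rw [pth, pth, cntCol_succ t ha 0, cntCol_succ t ha 1, if_pos h,
      if_neg (by omega)]
    push_cast
    ring
  · right
    refine ⟨?_, h⟩
    rw [pth, pth, cntCol_succ t ha 0, cntCol_succ t ha 1, if_neg (by omega),
      if_pos h]
    push_cast
    ring

lemma pth_steps (hsh : ∀ i, memShape2 x y (t i)) :
    ∀ a, a < n → pth n t (a + 1) = pth n t a + 1 ∨ pth n t (a + 1) = pth n t a - 1 := by
  intro a ha
  rcases pth_succ hsh ha with ⟨h, _⟩ | ⟨h, _⟩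
  · exact Or.inl h
  · exact Or.inr h

lemma row_eq (hstd : IsStdTab n t) (r : Fin n) :
    (t r).1 = cntCol n t (r : ℕ) ((t r).2) := by
  obtain ⟨hinj, hdcl, hmono⟩ := hstd
  rw [cntCol, ← Finset.card_range ((t r).1)]
  symm
  refine Finset.card_bij' (fun r' _ => (t r').1)
    (fun b hb => (hdcl r b ((t r).2) (le_of_lt (Finset.mem_range.mp hb)) le_rfl).choose)
    ?_ ?_ ?_ ?_
  · intro r' hr'
    simp only [Finset.mem_filter, Finset.mem_univ, true_and] at hr'
    rw [Finset.mem_range]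
    by_contra hge
    push_neg at hge
    have := hmono r r' hge (le_of_eq hr'.2.symm)
    rw [Fin.le_def] at this
    omega
  · intro b hb
    have hb' := Finset.mem_range.mp hb
    have hspec := (hdcl r b ((t r).2) (le_of_lt hb') le_rfl).choose_spec
    have hfst : (t ((hdcl r b ((t r).2) (le_of_lt hb') le_rfl).choose)).1 = b := by
      simpa using congrArg Prod.fst hspec
    have hsnd : (t ((hdcl r b ((t r).2) (le_of_lt hb') le_rfl).choose)).2 = (t r).2 := by
      simpa using congrArg Prod.snd hspec
    simp only [Finset.mem_filter, Finset.mem_univ, true_and]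
    constructor
    · have hle := hmono _ r (by omega) (le_of_eq hsnd)
      have hne : (hdcl r b ((t r).2) (le_of_lt hb') le_rfl).choose ≠ r := by
        intro hc
        rw [hc] at hfst
        omega
      have := lt_of_le_of_ne hle hne
      rw [Fin.lt_def] at this
      exact this
    · exact hsnd
  · intro r' hr'
    simp only [Finset.mem_filter, Finset.mem_univ, true_and] at hr'
    have hle1 : (t r').1 < (t r).1 := by
      by_contra hge
      push_neg at hge
      have := hmono r r' hge (le_of_eq hr'.2.symm)
      rw [Fin.le_def] at this
      omega
    apply hinj
    have hspec := (hdcl r ((t r').1) ((t r).2) (le_of_lt hle1) le_rfl).choose_spec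
    exact hspec.trans (Prod.ext rfl hr'.2.symm)
  · intro b hb
    have hb' := Finset.mem_range.mp hb
    have hspec := (hdcl r b ((t r).2) (le_of_lt hb') le_rfl).choose_spec
    simpa using congrArg Prod.fst hspec

lemma pth_nonneg (hstd : IsStdTab n t) (hsh : ∀ i, memShape2 x y (t i)) :
    ∀ a, 0 ≤ pth n t a := by
  obtain ⟨hinj, hdcl, hmono⟩ := hstd
  intro a
  suffices h : cntCol n t a 1 ≤ cntCol n t a 0 by
    rw [pth]
    have := (Nat.cast_le (α := ℤ)).mpr h
    omega
  rw [cntCol, cntCol]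
  apply Finset.card_le_card_of_injOn
    (fun r' => (hdcl r' ((t r').1) 0 le_rfl (Nat.zero_le _)).choose)
  · intro r' hr'
    simp only [Finset.mem_coe, Finset.mem_filter, Finset.mem_univ, true_and] at hr' ⊢
    have hspec := (hdcl r' ((t r').1) 0 le_rfl (Nat.zero_le _)).choose_spec
    constructor
    · have hle := hmono _ r' (by rw [hspec]) (by rw [hspec]; omega)
      rw [Fin.le_def] at hle
      omega
    · rw [hspec]
  · intro r1 h1 r2 h2 heq
    simp only [Finset.coe_filter, Set.mem_setOf_eq, Finset.mem_univ, true_and] at h1 h2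
    have hs1 := (hdcl r1 ((t r1).1) 0 le_rfl (Nat.zero_le _)).choose_spec
    have hs2 := (hdcl r2 ((t r2).1) 0 le_rfl (Nat.zero_le _)).choose_spec
    rw [show (hdcl r1 ((t r1).1) 0 le_rfl (Nat.zero_le _)).choose =
      (hdcl r2 ((t r2).1) 0 le_rfl (Nat.zero_le _)).choose from heq, hs2] at hs1
    apply hinj
    have hfst : (t r1).1 = (t r2).1 := by
      simpa using (congrArg Prod.fst hs1).symm
    exact Prod.ext hfst (h1.2.trans h2.2.symm)

lemma colCounts (hstd : IsStdTab n t) (hsh : ∀ i, memShape2 x y (t i))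
    (hn : n = 2 * x + y) : cntCol n t n 0 = x + y ∧ cntCol n t n 1 = x := by
  obtain ⟨hinj, hdcl, hmono⟩ := hstd
  classical
  set A := Finset.univ.filter fun r : Fin n => (t r).2 = 0 with hA
  set B := Finset.univ.filter fun r : Fin n => ¬ ((t r).2 = 0) with hB
  have hAB : A.card + B.card = n := by
    rw [hA, hB, Finset.card_filter_add_card_filter_not, Finset.card_univ,
      Fintype.card_fin]
  have hAle : A.card ≤ (Finset.range (x + y)).card := by
    apply Finset.card_le_card_of_injOn (fun r => (t r).1)
    · intro r hr
      simp only [hA, Finset.mem_coe, Finset.mem_filter, Finset.mem_univ, true_and] at hr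
      simp only [Finset.mem_coe, Finset.mem_range]
      rcases hsh r with ⟨h1, _⟩ | ⟨_, h1, _⟩ <;> omega
    · intro r1 h1 r2 h2 heq
      simp only [hA, Finset.coe_filter, Set.mem_setOf_eq, Finset.mem_univ,
        true_and] at h1 h2
      exact hinj (Prod.ext heq (h1.trans h2.symm))
  have hBle : B.card ≤ (Finset.range x).card := by
    apply Finset.card_le_card_of_injOn (fun r => (t r).1)
    · intro r hr
      simp only [hB, Finset.mem_coe, Finset.mem_filter, Finset.mem_univ, true_and] at hr
      simp only [Finset.mem_coe, Finset.mem_range]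
      rcases hsh r with ⟨h1, _⟩ | ⟨_, _, h1⟩
      · omega
      · exact absurd h1 hr
    · intro r1 h1 r2 h2 heq
      simp only [hB, Finset.coe_filter, Set.mem_setOf_eq, Finset.mem_univ,
        true_and] at h1 h2
      rcases col01 hsh r1 with hc1 | hc1
      · exact absurd hc1 h1
      · rcases col01 hsh r2 with hc2 | hc2
        · exact absurd hc2 h2
        · exact hinj (Prod.ext heq (hc1.trans hc2.symm))
  rw [Finset.card_range] at hAle hBle
  have hc0 : cntCol n t n 0 = A.card := by
    rw [cntCol, hA]
    congr 1
    apply Finset.filter_congr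
    intro r _
    simp [r.isLt]
  have hc1 : cntCol n t n 1 = B.card := by
    rw [cntCol, hB]
    congr 1
    apply Finset.filter_congr
    intro r _
    simp only [r.isLt, true_and]
    rcases col01 hsh r with h | h <;> simp [h]
  omega

lemma cnt_eq (hstd : IsStdTab n t) (hsh : ∀ i, memShape2 x y (t i)) :
    ∀ b, b ≤ n → upCnt (pth n t) b = cntCol n t b 0 ∧
      dnCnt (pth n t) b = cntCol n t b 1 := by
  intro b
  induction b with
  | zero => intro _; simp [upCnt, dnCnt, cntCol_zero]
  | succ b ih =>
    intro hb
    obtain ⟨IH1, IH2⟩ := ih (by omega)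
    have hbn : b < n := by omega
    rcases pth_succ hsh hbn with ⟨hs, hcol⟩ | ⟨hs, hcol⟩
    · rw [upCnt_succ, dnCnt_succ, if_pos hs, if_pos hs, cntCol_succ t hbn 0,
        cntCol_succ t hbn 1, if_pos hcol, if_neg (by omega)]
      omega
    · have hs' : ¬ (pth n t (b + 1) = pth n t b + 1) := by omega
      rw [upCnt_succ, dnCnt_succ, if_neg hs', if_neg hs', cntCol_succ t hbn 0,
        cntCol_succ t hbn 1, if_neg (by omega), if_pos hcol]
      omega

lemma rebuild_eq (hstd : IsStdTab n t) (hsh : ∀ i, memShape2 x y (t i)) :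
    rebuild n (pth n t) = t := by
  funext r
  have hr := r.isLt
  rcases pth_succ hsh hr with ⟨hs, hcol⟩ | ⟨hs, hcol⟩
  · rw [rebuild, if_pos hs]
    have h1 := (cnt_eq hstd hsh (r : ℕ) (by omega)).1
    rw [h1]
    have h2 := row_eq hstd r
    rw [Fin.eta] at hcol
    rw [hcol] at h2
    exact Prod.ext h2.symm ((Fin.eta r hr ▸ hcol).symm)
  · rw [rebuild, if_neg (by omega)]
    have h1 := (cnt_eq hstd hsh (r : ℕ) (by omega)).2
    rw [h1]
    have h2 := row_eq hstd r
    rw [Fin.eta] at hcol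
    rw [hcol] at h2
    exact Prod.ext h2.symm ((Fin.eta r hr ▸ hcol).symm)

end Std

section Rebuild

variable {x y : ℕ} {π' : ℕ → ℤ}

/-- Branch description of `rebuild`. -/
lemma rebuild_branch (hstep : ∀ a, a < n → π' (a + 1) = π' a + 1 ∨ π' (a + 1) = π' a - 1)
    (r : Fin n) :
    (π' ((r : ℕ) + 1) = π' (r : ℕ) + 1 ∧ rebuild n π' r = (upCnt π' (r : ℕ), 0)) ∨
    (π' ((r : ℕ) + 1) = π' (r : ℕ) - 1 ∧ rebuild n π' r = (dnCnt π' (r : ℕ), 1)) := by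
  rcases hstep (r : ℕ) r.isLt with h | h
  · exact Or.inl ⟨h, by rw [rebuild, if_pos h]⟩
  · refine Or.inr ⟨h, by rw [rebuild, if_neg (by omega)]⟩

lemma rebuild_good
    (hstep : ∀ a, a < n → π' (a + 1) = π' a + 1 ∨ π' (a + 1) = π' a - 1)
    (hpos : ∀ a, a ≤ n → 0 ≤ π' a) (hz : π' 0 = 0)
    (hup : upCnt π' n = x + y) (hdn : dnCnt π' n = x) :
    IsStdTab n (rebuild n π') ∧ (∀ i, memShape2 x y (rebuild n π' i)) ∧
    (∀ b, b ≤ n → pth n (rebuild n π') b = π' b) := by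
  have hval := cnt_val hz hstep
  have hbr := rebuild_branch hstep
  have hupdn : ∀ r : Fin n, π' ((r : ℕ) + 1) = π' (r : ℕ) - 1 →
      dnCnt π' (r : ℕ) + 1 ≤ upCnt π' (r : ℕ) := by
    intro r hd
    have h1 := hval ((r : ℕ) + 1) r.isLt
    have h2 := hval (r : ℕ) (le_of_lt r.isLt)
    have h3 := hpos ((r : ℕ) + 1) r.isLt
    have h4 := upCnt_succ π' (r : ℕ)
    have h5 := dnCnt_succ π' (r : ℕ)
    rw [if_neg (by omega)] at h4
    rw [if_neg (by omega)] at h5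
    omega
  refine ⟨⟨?_, ?_, ?_⟩, ?_, ?_⟩
  · -- injective
    intro r s h
    rcases hbr r with ⟨hr1, hr2⟩ | ⟨hr1, hr2⟩ <;>
      rcases hbr s with ⟨hs1, hs2⟩ | ⟨hs1, hs2⟩ <;>
      rw [hr2, hs2] at h
    · -- both up
      by_contra hne
      have hne' : (r : ℕ) ≠ (s : ℕ) := fun hc => hne (Fin.ext hc)
      rcases Nat.lt_or_ge (r : ℕ) (s : ℕ) with hlt | hge
      · have h1 := upCnt_succ π' (r : ℕ)
        rw [if_pos hr1] at h1
        have h2 := upCnt_mono π' (show (r : ℕ) + 1 ≤ (s : ℕ) by omega)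
        have := congrArg Prod.fst h
        simp only at this
        omega
      · have h1 := upCnt_succ π' (s : ℕ)
        rw [if_pos hs1] at h1
        have h2 := upCnt_mono π' (show (s : ℕ) + 1 ≤ (r : ℕ) by omega)
        have := congrArg Prod.fst h
        simp only at this
        omega
    · exact absurd (congrArg Prod.snd h) (by simp)
    · exact absurd (congrArg Prod.snd h) (by simp)
    · by_contra hne
      have hne' : (r : ℕ) ≠ (s : ℕ) := fun hc => hne (Fin.ext hc)
      rcases Nat.lt_or_ge (r : ℕ) (s : ℕ) with hlt | hge
      · have h1 := dnCnt_succ π' (r : ℕ)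
        rw [if_neg (by omega)] at h1
        have h2 := dnCnt_mono π' (show (r : ℕ) + 1 ≤ (s : ℕ) by omega)
        have := congrArg Prod.fst h
        simp only at this
        omega
      · have h1 := dnCnt_succ π' (s : ℕ)
        rw [if_neg (by omega)] at h1
        have h2 := dnCnt_mono π' (show (s : ℕ) + 1 ≤ (r : ℕ) by omega)
        have := congrArg Prod.fst h
        simp only at this
        omega
  · -- downward closed
    intro r a b ha hb
    rcases hbr r with ⟨hr1, hr2⟩ | ⟨hr1, hr2⟩
    · rw [hr2] at ha hb
      simp only at ha hb
      have hb0 : b = 0 := by omega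
      subst hb0
      have hcnt : a < ((Finset.range ((r : ℕ) + 1)).filter
          fun c => π' (c + 1) = π' c + 1).card := by
        have h1 := upCnt_succ π' (r : ℕ)
        rw [if_pos hr1] at h1
        rw [show ((Finset.range ((r : ℕ) + 1)).filter
          fun c => π' (c + 1) = π' c + 1).card = upCnt π' ((r : ℕ) + 1) from rfl, h1]
        omega
      obtain ⟨c, hc1, hc2, hc3⟩ := find_cnt _ _ _ hcnt
      refine ⟨⟨c, by omega⟩, ?_⟩
      rw [rebuild, if_pos hc2]
      rw [show upCnt π' c = a from hc3]
    · rw [hr2] at ha hb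
      simp only at ha hb
      rcases Nat.le_one_iff_eq_zero_or_eq_one.mp hb with rfl | rfl
      · -- b = 0 : find an up-step
        have hcnt : a < ((Finset.range (r : ℕ)).filter
            fun c => π' (c + 1) = π' c + 1).card := by
          have := hupdn r hr1
          rw [show ((Finset.range (r : ℕ)).filter
            fun c => π' (c + 1) = π' c + 1).card = upCnt π' (r : ℕ) from rfl]
          omega
        obtain ⟨c, hc1, hc2, hc3⟩ := find_cnt _ _ _ hcnt
        refine ⟨⟨c, by omega⟩, ?_⟩
        rw [rebuild, if_pos hc2]
        rw [show upCnt π' c = a from hc3]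
      · -- b = 1 : find a down-step
        have hcnt : a < ((Finset.range ((r : ℕ) + 1)).filter
            fun c => ¬ (π' (c + 1) = π' c + 1)).card := by
          have h1 := dnCnt_succ π' (r : ℕ)
          rw [if_neg (by omega)] at h1
          rw [show ((Finset.range ((r : ℕ) + 1)).filter
            fun c => ¬ (π' (c + 1) = π' c + 1)).card = dnCnt π' ((r : ℕ) + 1) from rfl, h1]
          omega
        obtain ⟨c, hc1, hc2, hc3⟩ := find_cnt _ _ _ hcnt
        refine ⟨⟨c, by omega⟩, ?_⟩
        rw [rebuild, if_neg hc2]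
        rw [show dnCnt π' c = a from hc3]
  · -- monotone
    intro r s h1 h2
    rcases hbr r with ⟨hr1, hr2⟩ | ⟨hr1, hr2⟩ <;>
      rcases hbr s with ⟨hs1, hs2⟩ | ⟨hs1, hs2⟩ <;>
      rw [hr2, hs2] at h1 h2 <;> simp only at h1 h2
    · -- up, up
      rw [Fin.le_def]
      by_contra hc
      push_neg at hc
      have h3 := upCnt_succ π' (s : ℕ)
      rw [if_pos hs1] at h3
      have h4 := upCnt_mono π' (show (s : ℕ) + 1 ≤ (r : ℕ) by omega)
      omega
    · -- up r, down s
      rw [Fin.le_def]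
      by_contra hc
      push_neg at hc
      have h3 := hupdn s hs1
      have h4 := upCnt_mono π' (show (s : ℕ) ≤ (r : ℕ) by omega)
      omega
    · -- down r, up s : cols 1 ≤ 0 impossible
      omega
    · -- down, down
      rw [Fin.le_def]
      by_contra hc
      push_neg at hc
      have h3 := dnCnt_succ π' (s : ℕ)
      rw [if_neg (by omega)] at h3
      have h4 := dnCnt_mono π' (show (s : ℕ) + 1 ≤ (r : ℕ) by omega)
      omega
  · -- shape
    intro i
    rcases hbr i with ⟨hi1, hi2⟩ | ⟨hi1, hi2⟩
    · rw [hi2]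
      have h1 := upCnt_succ π' (i : ℕ)
      rw [if_pos hi1] at h1
      have h2 := upCnt_mono π' (show (i : ℕ) + 1 ≤ n from i.isLt)
      rw [hup] at h2
      rcases Nat.lt_or_ge (upCnt π' (i : ℕ)) x with h | h
      · exact Or.inl ⟨h, by omega⟩
      · exact Or.inr ⟨h, by omega, rfl⟩
    · rw [hi2]
      have h1 := dnCnt_succ π' (i : ℕ)
      rw [if_neg (by omega)] at h1
      have h2 := dnCnt_mono π' (show (i : ℕ) + 1 ≤ n from i.isLt)
      rw [hdn] at h2
      exact Or.inl ⟨by omega, by omega⟩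
  · -- path of rebuild
    have key : ∀ b, b ≤ n → cntCol n (rebuild n π') b 0 = upCnt π' b ∧
        cntCol n (rebuild n π') b 1 = dnCnt π' b := by
      intro b
      induction b with
      | zero => intro _; simp [cntCol_zero, upCnt, dnCnt]
      | succ b ih =>
        intro hb
        obtain ⟨IH1, IH2⟩ := ih (by omega)
        have hbn : b < n := by omega
        rcases hbr ⟨b, hbn⟩ with ⟨h1, h2⟩ | ⟨h1, h2⟩ <;>
          simp only at h1 h2
        · rw [cntCol_succ _ hbn 0, cntCol_succ _ hbn 1, h2, upCnt_succ, dnCnt_succ]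
          simp only [if_pos h1]
          norm_num
          omega
        · have h1' : ¬ (π' (b + 1) = π' b + 1) := by omega
          rw [cntCol_succ _ hbn 0, cntCol_succ _ hbn 1, h2, upCnt_succ, dnCnt_succ]
          simp only [if_neg h1']
          norm_num
          omega
    intro b hb
    obtain ⟨h1, h2⟩ := key b hb
    rw [pth, h1, h2, hval b hb]

end Rebuild

/-! ### Residues -/

set_option maxRecDepth 4000 in
lemma resNode_rebuild (e₀ : ℕ) (π' : ℕ → ℤ) (r : Fin n) :
    resNode e₀ (rebuild n π' r) =
      (((if π' ((r : ℕ) + 1) = π' (r : ℕ) + 1 then -(upCnt π' (r : ℕ) : ℤ)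
        else 1 - (dnCnt π' (r : ℕ) : ℤ)) : ℤ) : ZMod e₀) := by
  rw [rebuild]
  by_cases h : π' ((r : ℕ) + 1) = π' (r : ℕ) + 1
  · rw [if_pos h, if_pos h]
    simp only [resNode, Nat.cast_zero, zero_sub, Int.cast_neg, Int.cast_natCast]
  · rw [if_neg h, if_neg h]
    simp only [resNode, Nat.cast_one, Int.cast_sub, Int.cast_one, Int.cast_natCast]

lemma res_refl (e₀ : ℕ) (he0 : (e₀ : ℤ) = e) (he : 2 ≤ e) (H : PathHyp e n π)
    (r : Fin n) :
    resNode e₀ (rebuild n (rfV e n π) r) = resNode e₀ (rebuild n π r) := by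
  have H' := rfV_pathHyp he H
  set π' := rfV e n π with hπ'
  have hr := r.isLt
  have c1 := cnt_val H.zero H.step (r : ℕ) (le_of_lt hr)
  have c1' := cnt_val H'.zero H'.step (r : ℕ) (le_of_lt hr)
  have c2 : ((upCnt π (r : ℕ) : ℤ)) + ((dnCnt π (r : ℕ) : ℤ)) = (r : ℕ) := by
    have h := upCnt_add_dnCnt π (r : ℕ)
    exact_mod_cast congrArg (Nat.cast (R := ℤ)) h
  have c2' : ((upCnt π' (r : ℕ) : ℤ)) + ((dnCnt π' (r : ℕ) : ℤ)) = (r : ℕ) := by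
    have h := upCnt_add_dnCnt π' (r : ℕ)
    exact_mod_cast congrArg (Nat.cast (R := ℤ)) h
  by_cases harc : ∃ r0 s0, IsArc e π n r0 s0 ∧ r0 ≤ (r : ℕ) ∧ (r : ℕ) < s0
  · obtain ⟨r0, s0, ha, h1, h2⟩ := harc
    have hdvd : e ∣ π r0 + 1 := isWall_dvd ha.wall
    rw [← he0] at hdvd
    have hzero : ((π r0 + 1 : ℤ) : ZMod e₀) = 0 :=
      (ZMod.intCast_zmod_eq_zero_iff_dvd _ _).mpr hdvd
    have hπ'r : π' (r : ℕ) = 2 * π r0 - π (r : ℕ) := rfV_arc he ha h1 (by omega)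
    have hπ'r1 : π' ((r : ℕ) + 1) = 2 * π r0 - π ((r : ℕ) + 1) :=
      rfV_arc he ha (by omega) (by omega)
    rcases H.step (r : ℕ) hr with hst | hst
    · have hst' : ¬ (π' ((r : ℕ) + 1) = π' (r : ℕ) + 1) := by
        rw [hπ'r, hπ'r1]; omega
      rw [resNode_rebuild, resNode_rebuild, if_neg hst', if_pos hst]
      have key : (1 : ℤ) - (dnCnt π' (r : ℕ) : ℤ) =
          -(upCnt π (r : ℕ) : ℤ) + (π r0 + 1) := by omega
      rw [key, Int.cast_add, hzero, add_zero]
    · have hst' : π' ((r : ℕ) + 1) = π' (r : ℕ) + 1 := by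
        rw [hπ'r, hπ'r1]; omega
      have hstne : ¬ (π ((r : ℕ) + 1) = π (r : ℕ) + 1) := by omega
      rw [resNode_rebuild, resNode_rebuild, if_pos hst', if_neg hstne]
      have key : -(upCnt π' (r : ℕ) : ℤ) =
          (1 - (dnCnt π (r : ℕ) : ℤ)) - (π r0 + 1) := by omega
      rw [key, Int.cast_sub, hzero, sub_zero]
  · have h1 : π' (r : ℕ) = π (r : ℕ) := by
      apply rfV_of_not_strictIn
      rintro ⟨r0, s0, ha, hh1, hh2⟩
      exact harc ⟨r0, s0, ha, by omega, by omega⟩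
    have h2 : π' ((r : ℕ) + 1) = π ((r : ℕ) + 1) := by
      apply rfV_of_not_strictIn
      rintro ⟨r0, s0, ha, hh1, hh2⟩
      exact harc ⟨r0, s0, ha, by omega, by omega⟩
    have hupeq : upCnt π' (r : ℕ) = upCnt π (r : ℕ) := by omega
    have hdneq : dnCnt π' (r : ℕ) = dnCnt π (r : ℕ) := by omega
    rw [resNode_rebuild, resNode_rebuild, h1, h2, hupeq, hdneq]

/-! ### Regularisation fixedness -/

lemma wallTimes_mem {f : ℤ} {π : ℕ → ℤ} {a : ℕ} :
    a ∈ wallTimes f n π ↔ a ≤ n ∧ isWall f (π a) := by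
  simp [wallTimes, Finset.mem_filter, Finset.mem_range, Nat.lt_succ_iff]

lemma regPath_eq_self {f : ℤ} {π : ℕ → ℤ} :
    regPath f n π = π ↔
      ∀ h : (wallTimes f n π).Nonempty, π ((wallTimes f n π).max' h) ≤ π n := by
  unfold regPath
  by_cases h : (wallTimes f n π).Nonempty
  · rw [dif_pos h]
    set a := (wallTimes f n π).max' h with ha
    have han : a ≤ n := (wallTimes_mem.mp (Finset.max'_mem _ h)).1
    constructor
    · intro hfix h'
      by_contra hlt
      push_neg at hlt
      replace hlt : π n < π a := hlt
      rw [if_pos hlt] at hfix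
      have := congrFun hfix n
      by_cases hna : n ≤ a
      · have : a = n := by omega
        rw [this] at hlt
        omega
      · rw [if_neg hna] at this
        omega
    · intro hcond
      rw [if_neg (not_lt.mpr (hcond h))]
  · rw [dif_neg h]
    exact iff_of_true rfl (fun h' => absurd h' h)

lemma tail_of_reg {f : ℤ} {π : ℕ → ℤ} (hfix : regPath f n π = π) :
    ∀ c, c ≤ n → isWall f (π c) →
      (∀ c', c < c' → c' ≤ n → ¬ isWall f (π c')) → π c ≤ π n := by
  intro c hc hw hnw
  have hmem : c ∈ wallTimes f n π := wallTimes_mem.mpr ⟨hc, hw⟩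
  have hne : (wallTimes f n π).Nonempty := ⟨c, hmem⟩
  have hca : c ≤ (wallTimes f n π).max' hne := Finset.le_max' _ c hmem
  have hmm := wallTimes_mem.mp (Finset.max'_mem _ hne)
  have hac : (wallTimes f n π).max' hne = c := by
    rcases eq_or_lt_of_le hca with heq | hlt
    · omega
    · exact absurd hmm.2 (hnw _ hlt hmm.1)
  have := regPath_eq_self.mp hfix hne
  rw [hac] at this
  exact this

lemma regPath_zero_fixed (π : ℕ → ℤ) : regPath 0 n π = π := by
  rw [regPath, dif_neg]
  rintro ⟨a, ha⟩
  rw [wallTimes_mem] at ha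
  obtain ⟨_, h1, h2⟩ := ha
  rw [Int.emod_zero] at h2
  omega

lemma reg_transfer {f : ℤ} (he : 2 ≤ e) (H : PathHyp e n π) (hef : e ∣ f)
    (hfix : regPath f n π = π) {σ : ℕ → ℤ}
    (hσ : ∀ c, c ≤ n → σ c = rfV e n π c) :
    regPath f n σ = σ := by
  have hwt : wallTimes f n σ = wallTimes f n π := by
    ext c
    rw [wallTimes_mem, wallTimes_mem]
    constructor
    · rintro ⟨h1, h2⟩
      rw [hσ c h1, rfV_wall_iff he hef] at h2
      exact ⟨h1, h2⟩
    · rintro ⟨h1, h2⟩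
      rw [hσ c h1, rfV_wall_iff he hef]
      exact ⟨h1, h2⟩
  rw [regPath_eq_self]
  intro h
  set a := (wallTimes f n σ).max' h with hadef
  have hmem : a ∈ wallTimes f n σ := Finset.max'_mem _ h
  have hmemπ : a ∈ wallTimes f n π := hwt ▸ hmem
  have h' : (wallTimes f n π).Nonempty := ⟨a, hmemπ⟩
  set a' := (wallTimes f n π).max' h' with ha'def
  have haa' : a = a' := by
    have h1 : a ≤ a' := Finset.le_max' _ a hmemπ
    have h2 : a' ≤ a := Finset.le_max' _ a' (hwt ▸ Finset.max'_mem _ h')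
    omega
  obtain ⟨han, haw⟩ := wallTimes_mem.mp hmemπ
  have hwea : isWall e (π a) := isWall_of_dvd_wall hef haw
  have hσa : σ a = π a := by rw [hσ a han, rfV_of_wall he hwea]
  have hσn : σ n = π n := by rw [hσ n le_rfl, rfV_last]
  rw [hσa, hσn, haa']
  exact regPath_eq_self.mp hfix h'

end Aux






/-- The arc-reflection involution on tableaux. -/
def iota (e p n x y : ℕ) : (Fin n → ℕ × ℕ) → (Fin n → ℕ × ℕ) :=
  fun t => if InDStd e p n x y t then rebuild n (rfV (e : ℤ) n (pth n t)) else t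

lemma iota_spec (e p : ℕ) (he : 2 ≤ e) (hp : p = 0 ∨ p.Prime) (n x y : ℕ)
    (hn : n = 2 * x + y) (t : Fin n → ℕ × ℕ) (ht : InDStd e p n x y t) :
    InDStd e p n x y (iota e p n x y t) ∧ iota e p n x y (iota e p n x y t) = t ∧
    (∀ r, resNode e ((iota e p n x y t) r) = resNode e (t r)) ∧
    pathDeg (e : ℤ) (pth n (iota e p n x y t)) 0 n = - pathDeg (e : ℤ) (pth n t) 0 n ∧
    (∀ r s : ℕ,
      (IsPosArc (e : ℤ) (pth n t) 0 n r s ∨ IsNegArc (e : ℤ) (pth n t) 0 n r s) →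
      ∀ b, r ≤ b → b ≤ s → pth n (iota e p n x y t) b = 2 * pth n t r - pth n t b) ∧
    (∀ b ≤ n,
      (¬ ∃ r s : ℕ,
        (IsPosArc (e : ℤ) (pth n t) 0 n r s ∨ IsNegArc (e : ℤ) (pth n t) 0 n r s) ∧
          r ≤ b ∧ b ≤ s) →
      pth n (iota e p n x y t) b = pth n t b) := by
  obtain ⟨hstd, hsh, hreg⟩ := ht
  have he2 : (2 : ℤ) ≤ (e : ℤ) := by exact_mod_cast he
  set π := pth n t with hπdef
  have hreg0 : regPath (e : ℤ) n π = π := by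
    have := hreg 0
    simpa using this
  have H : PathHyp (e : ℤ) n π :=
    ⟨pth_steps hsh, fun a _ => pth_nonneg ⟨hstd.1, hstd.2.1, hstd.2.2⟩ hsh a,
      pth_zero t, tail_of_reg hreg0⟩
  set π' := rfV (e : ℤ) n π with hπ'def
  have H' := rfV_pathHyp he2 H
  have hιt : iota e p n x y t = rebuild n π' := by
    rw [iota, if_pos ⟨hstd, hsh, hreg⟩]
  have hcc := colCounts hstd hsh hn
  have hce := cnt_eq hstd hsh n le_rfl
  have hπn : π' n = π n := rfV_last
  have hupn : upCnt π n = x + y := by rw [hce.1, hcc.1]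
  have hdnn : dnCnt π n = x := by rw [hce.2, hcc.2]
  have i1 := cnt_val H.zero H.step n le_rfl
  have i1' := cnt_val H'.zero H'.step n le_rfl
  rw [← hπ'def] at i1'
  have hπn' : π' n = π n := hπn
  have i2 := upCnt_add_dnCnt π n
  have i2' := upCnt_add_dnCnt π' n
  have hup' : upCnt π' n = x + y := by omega
  have hdn' : dnCnt π' n = x := by omega
  obtain ⟨hstd', hsh', hpth'⟩ := rebuild_good H'.step H'.pos H'.zero hup' hdn'
  have hσ : ∀ b, b ≤ n → pth n (iota e p n x y t) b = π' b := by
    rw [hιt]; exact hpth'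
  have hInD' : InDStd e p n x y (iota e p n x y t) := by
    refine ⟨hιt ▸ hstd', hιt ▸ hsh', ?_⟩
    intro z
    have hf : (e : ℤ) * (p : ℤ) ^ z = 0 ∨ (e : ℤ) ∣ (e : ℤ) * (p : ℤ) ^ z := by
      rcases hp with rfl | hp
      · rcases z with _ | z
        · right; simpa using dvd_refl (e : ℤ)
        · left; simp
      · right; exact dvd_mul_right _ _
    rcases hf with hf | hf
    · rw [hf]
      exact regPath_zero_fixed _
    · exact reg_transfer he2 H hf (hreg z) hσ
  refine ⟨hInD', ?_, ?_, ?_, ?_, ?_⟩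
  · -- involution
    rw [iota, if_pos hInD']
    have h1 : rebuild n (rfV (e : ℤ) n (pth n (iota e p n x y t))) =
        rebuild n (rfV (e : ℤ) n π') :=
      rebuild_congr (fun c hc => rfV_congr (fun c' hc' => hσ c' hc') hc)
    have h2 : rebuild n (rfV (e : ℤ) n π') = rebuild n π :=
      rebuild_congr (fun c hc => rfV_invol he2 H hc)
    rw [h1, h2, rebuild_eq hstd hsh]
  · -- residues
    intro r
    rw [hιt]
    have := res_refl e rfl he2 H r
    rw [this, rebuild_eq hstd hsh]
  · -- degree
    have h1 : pathDeg (e : ℤ) (pth n (iota e p n x y t)) 0 n =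
        pathDeg (e : ℤ) π' 0 n :=
      pathDeg_congr (fun c _ hc => hσ c hc)
    rw [h1]
    exact deg_refl he2 H
  · -- arc reflection formula
    intro r s harc b h1 h2
    have harc' : IsArc (e : ℤ) π n r s := harc
    rw [hσ b (le_trans h2 harc'.le_n)]
    exact rfV_arc he2 harc' h1 h2
  · -- fixed off arcs
    intro b hb hnot
    rw [hσ b hb]
    apply rfV_of_not_strictIn
    rintro ⟨r, s, harc, h1, h2⟩
    exact hnot ⟨r, s, harc, by omega, by omega⟩

theorem stmt15 (e p : ℕ) (he : 2 ≤ e) (hp : p = 0 ∨ p.Prime)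
    (n x y : ℕ) (hn : n = 2 * x + y) :
    (∀ (iv : Fin n → ZMod e) (d : ℤ),
      Set.ncard {t : Fin n → ℕ × ℕ | InDStd e p n x y t ∧
          (∀ r, resNode e (t r) = iv r) ∧ pathDeg (e : ℤ) (pth n t) 0 n = d} =
      Set.ncard {t : Fin n → ℕ × ℕ | InDStd e p n x y t ∧
          (∀ r, resNode e (t r) = iv r) ∧ pathDeg (e : ℤ) (pth n t) 0 n = -d}) ∧
    ∃ ι : (Fin n → ℕ × ℕ) → (Fin n → ℕ × ℕ),
      ∀ t, InDStd e p n x y t →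
        InDStd e p n x y (ι t) ∧ ι (ι t) = t ∧
        (∀ r, resNode e ((ι t) r) = resNode e (t r)) ∧
        pathDeg (e : ℤ) (pth n (ι t)) 0 n = - pathDeg (e : ℤ) (pth n t) 0 n ∧
        (∀ r s : ℕ,
          (IsPosArc (e : ℤ) (pth n t) 0 n r s ∨ IsNegArc (e : ℤ) (pth n t) 0 n r s) →
          ∀ b, r ≤ b → b ≤ s → pth n (ι t) b = 2 * pth n t r - pth n t b) ∧
        (∀ b ≤ n,
          (¬ ∃ r s : ℕ,
            (IsPosArc (e : ℤ) (pth n t) 0 n r s ∨ IsNegArc (e : ℤ) (pth n t) 0 n r s) ∧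
              r ≤ b ∧ b ≤ s) →
          pth n (ι t) b = pth n t b) := by
  
  have hspec := fun t ht => iota_spec e p he hp n x y hn t ht
  constructor
  · intro iv d
    have himg : {t : Fin n → ℕ × ℕ | InDStd e p n x y t ∧
          (∀ r, resNode e (t r) = iv r) ∧ pathDeg (e : ℤ) (pth n t) 0 n = -d} =
        iota e p n x y '' {t : Fin n → ℕ × ℕ | InDStd e p n x y t ∧
          (∀ r, resNode e (t r) = iv r) ∧ pathDeg (e : ℤ) (pth n t) 0 n = d} := by
      ext u
      simp only [Set.mem_image, Set.mem_setOf_eq]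
      constructor
      · rintro ⟨h1, h2, h3⟩
        obtain ⟨hA, hB, hC, hD, _⟩ := hspec u h1
        refine ⟨iota e p n x y u, ⟨hA, ?_, ?_⟩, hB⟩
        · intro r
          rw [hC r]
          exact h2 r
        · rw [hD, h3]
          ring
      · rintro ⟨v, ⟨h1, h2, h3⟩, rfl⟩
        obtain ⟨hA, hB, hC, hD, _⟩ := hspec v h1
        refine ⟨hA, ?_, ?_⟩
        · intro r
          rw [hC r]
          exact h2 r
        · rw [hD, h3]
    rw [himg]
    rw [Set.ncard_image_of_injOn]
    intro a ha b hb hab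
    have h1 := (hspec a ha.1).2.1
    have h2 := (hspec b hb.1).2.1
    rw [← h1, ← h2, hab]
  · refine ⟨iota e p n x y, ?_⟩
    intro t ht
    exact hspec t ht
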